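/- Let a₁,…,a_n ∈ ℂ be distinct and A = ∏_{j=1}^n (X − a_j). Let z₁,…,z_m ∈ ℂ be pairwise distinct points with z_k ≠ a_j for all k and j, and set y = ∏_{k=1}^m (X − z_k). Then y divides A·y″ − A′·y′ in ℂ[X] (equivalently, there exists C ∈ ℂ[X] with A·y″ − A′·y′ + C·y = 0) if and only if the equations 2·Σ_{j≠k} 1/(z_k − z_j) − Σ_{j=1}^n 1/(z_k − a_j) = 0 hold for every k = 1,…,m. -/

import Mathlib

open Polynomial Finset

lemma deriv_prod_X_sub_C {ι : Type*} [DecidableEq ι] (s : Finset ι) (w : ι → ℂ) :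
    derivative (∏ i ∈ s, (X - C (w i))) = ∑ b ∈ s, ∏ a ∈ s.erase b, (X - C (w a)) := by
  induction s using Finset.induction_on with
  | empty => simp
  | @insert i s hi ih =>
    rw [Finset.prod_insert hi, derivative_mul, ih, Finset.sum_insert hi,
      Finset.erase_insert hi]
    simp only [derivative_sub, derivative_X, derivative_C, sub_zero, one_mul]
    rw [Finset.mul_sum]
    congr 1
    refine Finset.sum_congr rfl fun b hb => ?_
    rw [Finset.erase_insert_of_ne (by rintro rfl; exact hi hb),
      Finset.prod_insert (fun h => hi (Finset.mem_of_mem_erase h))]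

lemma eval_deriv_prod_X_sub_C {m : ℕ} (z : Fin m → ℂ) (hz : Function.Injective z) (k : Fin m) :
    eval (z k) (derivative (∏ i, (X - C (z i)))) = ∏ j ∈ univ.erase k, (z k - z j) := by
  rw [deriv_prod_X_sub_C, eval_finset_sum]
  rw [Finset.sum_eq_single k]
  · simp [eval_prod]
  · intro b _ hbk
    rw [eval_prod]
    refine Finset.prod_eq_zero (Finset.mem_erase.mpr ⟨fun h => hbk h.symm, mem_univ k⟩) ?_
    simp
  · simp

lemma eval_deriv2_prod_X_sub_C {m : ℕ} (z : Fin m → ℂ) (hz : Function.Injective z) (k : Fin m) :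
    eval (z k) (derivative (derivative (∏ i, (X - C (z i))))) =
      2 * ∑ c ∈ univ.erase k, ∏ a ∈ (univ.erase k).erase c, (z k - z a) := by
  rw [deriv_prod_X_sub_C]
  rw [derivative_sum]
  simp only [deriv_prod_X_sub_C]
  rw [eval_finset_sum]
  simp only [eval_finset_sum, eval_prod, eval_sub, eval_X, eval_C]
  rw [← Finset.add_sum_erase _ _ (mem_univ k)]
  have h2 : ∀ b ∈ univ.erase k,
      (∑ c ∈ (univ.erase b), ∏ a ∈ ((univ.erase b)).erase c, (z k - z a)) =
      ∏ a ∈ (univ.erase k).erase b, (z k - z a) := by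
    intro b hb
    have hbk : b ≠ k := (Finset.mem_erase.mp hb).1
    rw [Finset.sum_eq_single k]
    · rw [Finset.erase_right_comm]
    · intro c hc hck
      exact Finset.prod_eq_zero (i := k)
        (Finset.mem_erase.mpr ⟨fun h => hck h.symm,
          Finset.mem_erase.mpr ⟨fun h => hbk h.symm, mem_univ k⟩⟩) (by simp)
    · intro h
      exact absurd (Finset.mem_erase.mpr ⟨hbk.symm, mem_univ k⟩) h
  rw [Finset.sum_congr rfl h2]
  ring

set_option maxHeartbeats 800000 in
/-- **Stieltjes' equilibrium conditions.** With `A = ∏_j (X - a_j)` and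
`y = ∏_k (X - z_k)` (the `z_k` pairwise distinct and distinct from the `a_j`),
`y` divides `A y'' - A' y'` iff
`2 Σ_{j≠k} 1/(z_k - z_j) - Σ_j 1/(z_k - a_j) = 0` for every `k`. -/
theorem stieltjes_equilibrium_iff
    (n m : ℕ) (a : Fin n → ℂ) (ha : Function.Injective a)
    (z : Fin m → ℂ) (hz : Function.Injective z) (hza : ∀ k j, z k ≠ a j) :
    (∏ k, (X - C (z k))) ∣
        ((∏ j, (X - C (a j))) * derivative (derivative (∏ k, (X - C (z k))))
          - derivative (∏ j, (X - C (a j))) * derivative (∏ k, (X - C (z k)))) ↔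
      ∀ k, 2 * ∑ j ∈ Finset.univ.erase k, (z k - z j)⁻¹
            - ∑ j, (z k - a j)⁻¹ = 0 := by
  have key : ∀ p : ℂ[X], (∏ k, (X - C (z k))) ∣ p ↔ ∀ k, p.eval (z k) = 0 := by
    intro p
    constructor
    · rintro ⟨q, rfl⟩ k
      rw [eval_mul, eval_prod]
      rw [Finset.prod_eq_zero (mem_univ k) (by simp)]
      ring
    · intro h
      exact Fintype.prod_dvd_of_coprime (pairwise_coprime_X_sub_C hz)
        (fun k => dvd_iff_isRoot.mpr (h k))
  rw [key]
  apply forall_congr'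
  intro k
  have hPk : (∏ j ∈ univ.erase k, (z k - z j)) ≠ 0 := by
    refine Finset.prod_ne_zero_iff.mpr fun j hj => ?_
    have : j ≠ k := (Finset.mem_erase.mp hj).1
    exact sub_ne_zero.mpr fun h => this (hz h.symm)
  have hAk : (∏ j, (z k - a j)) ≠ 0 :=
    Finset.prod_ne_zero_iff.mpr fun j _ => sub_ne_zero.mpr (hza k j)
  -- evaluate each piece
  have e1 : eval (z k) (∏ j, (X - C (a j))) = ∏ j, (z k - a j) := by simp [eval_prod]
  have e2 : eval (z k) (derivative (∏ j, (X - C (a j)))) =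
      (∑ j, (z k - a j)⁻¹) * ∏ j, (z k - a j) := by
    rw [deriv_prod_X_sub_C, eval_finset_sum, Finset.sum_mul]
    refine Finset.sum_congr rfl fun j _ => ?_
    rw [eval_prod]
    simp only [eval_sub, eval_X, eval_C]
    rw [← Finset.mul_prod_erase _ _ (mem_univ j), ← mul_assoc,
      inv_mul_cancel₀ (sub_ne_zero.mpr (hza k j)), one_mul]
  have e3 := eval_deriv_prod_X_sub_C z hz k
  have e4 : eval (z k) (derivative (derivative (∏ i, (X - C (z i))))) =
      2 * (∑ c ∈ univ.erase k, (z k - z c)⁻¹) * ∏ j ∈ univ.erase k, (z k - z j) := by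
    rw [eval_deriv2_prod_X_sub_C z hz k, mul_assoc, Finset.sum_mul]
    congr 1
    refine Finset.sum_congr rfl fun c hc => ?_
    have hck : c ≠ k := (Finset.mem_erase.mp hc).1
    rw [← Finset.mul_prod_erase _ _ hc, ← mul_assoc,
      inv_mul_cancel₀ (sub_ne_zero.mpr fun h => hck (hz h.symm)), one_mul]
  rw [eval_sub, eval_mul, eval_mul, e1, e2, e3, e4]
  have expand : (∏ j, (z k - a j)) * (2 * (∑ c ∈ univ.erase k, (z k - z c)⁻¹)
        * ∏ j ∈ univ.erase k, (z k - z j))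
      - (∑ j, (z k - a j)⁻¹) * (∏ j, (z k - a j)) * ∏ j ∈ univ.erase k, (z k - z j)
      = ((∏ j, (z k - a j)) * ∏ j ∈ univ.erase k, (z k - z j)) *
        (2 * (∑ c ∈ univ.erase k, (z k - z c)⁻¹) - ∑ j, (z k - a j)⁻¹) := by ring
  rw [expand, mul_eq_zero]
  simp [hPk, hAk]
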